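/- Let c_1,…,c_n be reals with c_1 = 0 and c_n = 1, and let d_1,…,d_n be reals with d_1 = d_n = 1 and d_i ≠ 0 for all i. Set A = F·D, Ã = T·(D·A·G)ᵀ·T, C = diag(c_1,…,c_n), and C̃ = I − T·C·T. Then for every integer k ≥ 1, Tr(P·Ã^k·C̃) = Tr(P·A^k·C); that is, the tall-tree quantities Tr(P·A^k·C) are conserved by the c-reflection transformation. -/

import Mathlib

open Finset Matrix
/-- The matrix `D` with entries `d_{ij}`: `0` for `i < j`, `d_i` for `i = j`, and
`-d_j · (∏_{k=j+1}^{i-1} (1 - d_k)) · d_i` for `i > j`. -/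
def Dmat (n : ℕ) (d : Fin n → ℝ) : Matrix (Fin n) (Fin n) ℝ :=
  Matrix.of fun i j =>
    if i < j then 0
    else if i = j then d i
    else -(d j) * (∏ k ∈ Finset.Ioo j i, (1 - d k)) * d i

/-- The lower-triangular matrix `G` with `G_{ii} = 1/d_i`, `G_{ij} = 1` for `i > j`. -/
noncomputable def Gmat (n : ℕ) (d : Fin n → ℝ) : Matrix (Fin n) (Fin n) ℝ :=
  Matrix.of fun i j => if i = j then 1 / d i else if j < i then 1 else 0

/-- The matrix `F` with `F_{ij} = c_i - c_j` for `i > j` and `0` otherwise. -/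
def Fmat (n : ℕ) (c : Fin n → ℝ) : Matrix (Fin n) (Fin n) ℝ :=
  Matrix.of fun i j => if j < i then c i - c j else 0

/-- The antidiagonal permutation matrix `T`, `T_{ij} = 1` iff `i + j = n + 1` (1-based). -/
def Tmat (n : ℕ) : Matrix (Fin n) (Fin n) ℝ :=
  Matrix.of fun i j => if (i : ℕ) + (j : ℕ) + 1 = n then 1 else 0

/-- The matrix `P` whose last column consists of ones and all other entries are `0`. -/
def Pmat (n : ℕ) : Matrix (Fin n) (Fin n) ℝ :=
  Matrix.of fun _ j => if (j : ℕ) + 1 = n then 1 else 0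

/- ### Auxiliary material -/

/-- Telescoping sum, products at the bottom. -/
lemma tel_bot (g : ℕ → ℝ) (a : ℕ) : ∀ b, a ≤ b →
    ∑ k ∈ Finset.Ico a b, g k * ∏ m ∈ Finset.Ico a k, (1 - g m)
      = 1 - ∏ m ∈ Finset.Ico a b, (1 - g m) := by
  intro b hb
  induction b, hb using Nat.le_induction with
  | base => simp
  | succ b hb ih =>
      rw [Finset.sum_Ico_succ_top hb, ih, Finset.prod_Ico_succ_top hb]
      ring

/-- Telescoping sum, products at the top. -/
lemma tel_top (g : ℕ → ℝ) (a : ℕ) : ∀ b, a ≤ b →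
    ∑ j ∈ Finset.Ico a b, g j * ∏ k ∈ Finset.Ico (j+1) b, (1 - g k)
      = 1 - ∏ k ∈ Finset.Ico a b, (1 - g k) := by
  intro b hb
  induction b, hb using Nat.le_induction with
  | base => simp
  | succ b hb ih =>
    rw [Finset.sum_Ico_succ_top hb, Finset.prod_Ico_succ_top hb]
    have h1 : ∑ j ∈ Finset.Ico a b, g j * ∏ k ∈ Finset.Ico (j+1) (b+1), (1 - g k)
        = (1 - g b) * ∑ j ∈ Finset.Ico a b, g j * ∏ k ∈ Finset.Ico (j+1) b, (1 - g k) := by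
      rw [Finset.mul_sum]
      refine Finset.sum_congr rfl fun j hj => ?_
      rw [Finset.prod_Ico_succ_top (Finset.mem_Ico.mp hj).2]
      ring
    rw [h1, ih]
    simp only [Finset.Ico_self, Finset.prod_empty, mul_one]
    ring

/-- The `ℕ`-indexed version of `Dmat`. -/
noncomputable def Dnat (g : ℕ → ℝ) : ℕ → ℕ → ℝ := fun a b =>
  if a < b then 0 else if a = b then g a
  else -(g b) * (∏ m ∈ Finset.Ico (b+1) a, (1 - g m)) * g a

/-- The `ℕ`-indexed version of `Gmat`. -/
noncomputable def Gnat (g : ℕ → ℝ) : ℕ → ℕ → ℝ := fun a b =>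
  if a = b then 1 / g a else if b < a then 1 else 0

lemma Dmat_eq (n : ℕ) (d : Fin n → ℝ) (g : ℕ → ℝ) (hgd : ∀ i : Fin n, g ↑i = d i)
    (i j : Fin n) : Dmat n d i j = Dnat g ↑i ↑j := by
  have hprod : (∏ k ∈ Finset.Ioo j i, (1 - d k))
      = ∏ m ∈ Finset.Ico ((j:ℕ)+1) (i:ℕ), (1 - g m) := by
    rw [Finset.Ico_add_one_left_eq_Ioo, ← Fin.map_valEmbedding_Ioo, Finset.prod_map]
    simp [hgd]
  simp only [Dmat, Dnat, Matrix.of_apply, Fin.lt_def, Fin.ext_iff, hgd, hprod]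

lemma Gmat_eq (n : ℕ) (d : Fin n → ℝ) (g : ℕ → ℝ) (hgd : ∀ i : Fin n, g ↑i = d i)
    (i j : Fin n) : Gmat n d i j = Gnat g ↑i ↑j := by
  simp only [Gmat, Gnat, Matrix.of_apply, Fin.lt_def, Fin.ext_iff, hgd]

/-- Row sums of `Dnat`. -/
lemma rowDnat (g : ℕ → ℝ) (hg0 : g 0 = 1) (n i : ℕ) (hi : i < n) :
    ∑ j ∈ Finset.range n, Dnat g i j = if i = 0 then 1 else 0 := by
  have hin : i + 1 ≤ n := hi
  rw [Finset.range_eq_Ico, ← Finset.sum_Ico_consecutive _ (Nat.zero_le (i+1)) hin,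
      Finset.sum_Ico_succ_top (Nat.zero_le _)]
  rw [show (∑ j ∈ Finset.Ico (i+1) n, Dnat g i j) = 0 from
    Finset.sum_eq_zero fun j hj => by
      have : i < j := (Finset.mem_Ico.mp hj).1
      simp only [Dnat]; rw [if_pos this]]
  rw [add_zero, show Dnat g i i = g i from by simp [Dnat]]
  rw [show (∑ j ∈ Finset.Ico 0 i, Dnat g i j)
      = -(g i) * ∑ j ∈ Finset.Ico 0 i, g j * ∏ m ∈ Finset.Ico (j+1) i, (1 - g m) from by
    rw [Finset.mul_sum]
    refine Finset.sum_congr rfl fun j hj => ?_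
    have hji : j < i := (Finset.mem_Ico.mp hj).2
    simp only [Dnat]
    rw [if_neg (by omega), if_neg (by omega)]
    ring]
  rw [tel_top g 0 i (Nat.zero_le _)]
  rcases Nat.eq_zero_or_pos i with h0 | h0
  · subst h0; simp [hg0]
  · rw [if_neg (by omega)]
    rw [Finset.prod_eq_zero (Finset.mem_Ico.mpr ⟨le_refl 0, h0⟩) (by rw [hg0]; ring)]
    ring

/-- `G * D = 1` at the level of `ℕ`-indexed entries. -/
lemma GDnat (g : ℕ → ℝ) (n i j : ℕ) (hi : i < n) (hgi : g i ≠ 0) :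
    ∑ k ∈ Finset.range n, Gnat g i k * Dnat g k j = if i = j then 1 else 0 := by
  have hin : i + 1 ≤ n := hi
  rw [Finset.range_eq_Ico, ← Finset.sum_Ico_consecutive _ (Nat.zero_le (i+1)) hin,
      Finset.sum_Ico_succ_top (Nat.zero_le _)]
  rw [show (∑ k ∈ Finset.Ico (i+1) n, Gnat g i k * Dnat g k j) = 0 from
    Finset.sum_eq_zero fun k hk => by
      have hik : i < k := (Finset.mem_Ico.mp hk).1
      have h : Gnat g i k = 0 := by
        simp only [Gnat]; rw [if_neg (by omega), if_neg (by omega)]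
      rw [h, zero_mul]]
  rw [add_zero]
  rw [Finset.sum_congr rfl (fun k hk => show Gnat g i k * Dnat g k j = Dnat g k j from by
    have hki : k < i := (Finset.mem_Ico.mp hk).2
    have h : Gnat g i k = 1 := by
      simp only [Gnat]; rw [if_neg (by omega), if_pos hki]
    rw [h, one_mul])]
  rw [show Gnat g i i = 1 / g i from by simp [Gnat]]
  rcases lt_trichotomy i j with hij | hij | hij
  · rw [show Dnat g i j = 0 from by simp only [Dnat]; rw [if_pos hij], mul_zero, add_zero]
    rw [Finset.sum_eq_zero fun k hk => by
      have : k < i := (Finset.mem_Ico.mp hk).2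
      simp only [Dnat]; rw [if_pos (by omega)]]
    rw [if_neg (by omega)]
  · subst hij
    rw [Finset.sum_eq_zero fun k hk => by
        have : k < i := (Finset.mem_Ico.mp hk).2
        simp only [Dnat]; rw [if_pos this]]
    rw [show Dnat g i i = g i from by simp [Dnat],
      zero_add, one_div, inv_mul_cancel₀ hgi, if_pos rfl]
  · have hsplit : ∑ k ∈ Finset.Ico 0 i, Dnat g k j
        = g j * ∏ m ∈ Finset.Ico (j+1) i, (1 - g m) := by
      rw [← Finset.sum_Ico_consecutive _ (Nat.zero_le j) (le_of_lt hij)]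
      rw [Finset.sum_eq_zero fun k hk => by
        have : k < j := (Finset.mem_Ico.mp hk).2
        simp only [Dnat]; rw [if_pos this]]
      rw [zero_add, Finset.sum_eq_sum_Ico_succ_bot hij]
      rw [show Dnat g j j = g j from by simp [Dnat]]
      rw [show (∑ k ∈ Finset.Ico (j+1) i, Dnat g k j)
          = -(g j) * ∑ k ∈ Finset.Ico (j+1) i, g k * ∏ m ∈ Finset.Ico (j+1) k, (1 - g m) from by
        rw [Finset.mul_sum]
        refine Finset.sum_congr rfl fun k hk => ?_
        have h1 : j < k := by have := (Finset.mem_Ico.mp hk).1; omega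
        simp only [Dnat]
        rw [if_neg (by omega), if_neg (by omega)]
        ring]
      rw [tel_bot g (j+1) i hij]
      ring
    rw [hsplit]
    rw [show Dnat g i j = -(g j) * (∏ m ∈ Finset.Ico (j+1) i, (1 - g m)) * g i from by
      simp only [Dnat]; rw [if_neg (by omega), if_neg (by omega)]]
    rw [if_neg (by omega)]
    field_simp
    ring

theorem stmt_13 (n : ℕ) (hn : 2 ≤ n) (c d : Fin n → ℝ)
    (hc1 : c ⟨0, by omega⟩ = 0) (hcn : c ⟨n - 1, by omega⟩ = 1)
    (hd1 : d ⟨0, by omega⟩ = 1) (hdn : d ⟨n - 1, by omega⟩ = 1)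
    (hd : ∀ i : Fin n, d i ≠ 0)
    (A Atil C Ctil : Matrix (Fin n) (Fin n) ℝ)
    (hA : A = Fmat n c * Dmat n d)
    (hAtil : Atil = Tmat n * (Dmat n d * A * Gmat n d)ᵀ * Tmat n)
    (hC : C = Matrix.diagonal c)
    (hCtil : Ctil = 1 - Tmat n * C * Tmat n) :
    ∀ k : ℕ, 1 ≤ k →
      Matrix.trace (Pmat n * Atil ^ k * Ctil) =
        Matrix.trace (Pmat n * A ^ k * C) := by
  intro k _
  have hz' : 0 < n := by omega
  set z : Fin n := ⟨0, by omega⟩ with hzdef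
  set last : Fin n := ⟨n - 1, by omega⟩ with hlastdef
  have hzval : (z : ℕ) = 0 := rfl
  have hlastval : (last : ℕ) = n - 1 := rfl
  -- the ℕ-extension of d
  set g : ℕ → ℝ := fun m => if h : m < n then d ⟨m, h⟩ else 0 with hgdef
  have hgval : ∀ i : Fin n, g ↑i = d i := fun i => by simp [hgdef, i.isLt]
  have hg0 : g 0 = 1 := by
    have := hgval z; rw [hzval] at this; rw [this]; exact hd1
  have hg_ne : ∀ m : ℕ, m < n → g m ≠ 0 := fun m hm => by
    have := hgval ⟨m, hm⟩; simp only [Fin.val_mk] at this; rw [this]; exact hd ⟨m, hm⟩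
  -- transfer lemmas
  have hDfin : ∀ i j : Fin n, Dmat n d i j = Dnat g ↑i ↑j := Dmat_eq n d g hgval
  have hGfin : ∀ i j : Fin n, Gmat n d i j = Gnat g ↑i ↑j := Gmat_eq n d g hgval
  -- G * D = 1
  have hGD : Gmat n d * Dmat n d = 1 := by
    ext i j
    rw [Matrix.mul_apply]
    rw [show (∑ k : Fin n, Gmat n d i k * Dmat n d k j)
        = ∑ k ∈ Finset.range n, Gnat g ↑i k * Dnat g k ↑j from by
      rw [← Fin.sum_univ_eq_sum_range (fun k => Gnat g ↑i k * Dnat g k ↑j) n]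
      exact Finset.sum_congr rfl fun k _ => by rw [hGfin, hDfin]]
    rw [GDnat g n ↑i ↑j i.isLt (hg_ne _ i.isLt), Matrix.one_apply]
    simp [Fin.ext_iff]
  have hDG : Dmat n d * Gmat n d = 1 := mul_eq_one_comm.mp hGD
  -- row sums of D
  have hrowD : ∀ i : Fin n, ∑ j, Dmat n d i j = if i = z then 1 else 0 := by
    intro i
    rw [show (∑ j : Fin n, Dmat n d i j) = ∑ j ∈ Finset.range n, Dnat g ↑i j from by
      rw [← Fin.sum_univ_eq_sum_range (fun j => Dnat g ↑i j) n]
      exact Finset.sum_congr rfl fun j _ => hDfin i j]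
    rw [rowDnat g hg0 n ↑i i.isLt]
    simp [Fin.ext_iff, hzval]
  -- row sums of A are c
  have hArow : ∀ i : Fin n, ∑ j, A i j = c i := by
    intro i
    rw [hA]
    simp only [Matrix.mul_apply]
    rw [Finset.sum_comm]
    simp only [← Finset.mul_sum, hrowD]
    simp only [mul_ite, mul_one, mul_zero, Finset.sum_ite_eq', Finset.mem_univ, if_true]
    by_cases h : z < i
    · simp [Fmat, h, hc1]
    · have hiz : i = z := by
        apply Fin.ext
        rw [hzval]
        simp only [Fin.lt_def, hzval, not_lt] at h
        omega
      rw [hiz]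
      simp [Fmat, hc1]
  -- column 0 of G is all ones
  have hGcol : ∀ i : Fin n, Gmat n d i z = 1 := by
    intro i
    by_cases h : i = z
    · rw [h]; simp [Gmat, hzdef, hd1]; exact hd1
    · have hz : z < i := by
        rw [Fin.lt_def, hzval]
        have : (i : ℕ) ≠ 0 := fun hh => h (Fin.ext (by rw [hzval]; exact hh))
        omega
      simp [Gmat, h, hz]
  -- last row of F is 1 - c
  have hFlast : ∀ j : Fin n, Fmat n c last j = 1 - c j := by
    intro j
    by_cases h : j < last
    · simp [Fmat, h, hcn]
    · have hjl : j = last := by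
        apply Fin.ext
        rw [hlastval]
        rw [Fin.lt_def, hlastval, not_lt] at h
        have := j.isLt
        omega
      rw [hjl]
      simp [Fmat, hcn]
  -- T lemmas
  have hTapp : ∀ i j : Fin n, Tmat n i j = if j = i.rev then 1 else 0 := by
    intro i j
    have h1 := i.isLt
    have h2 := j.isLt
    have h : ((i:ℕ) + (j:ℕ) + 1 = n) ↔ (j = i.rev) := by
      rw [Fin.ext_iff, Fin.val_rev]; omega
    simp [Tmat, h]
  have hTapp' : ∀ i j : Fin n, Tmat n i j = if i = j.rev then 1 else 0 := by
    intro i j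
    have h1 := i.isLt
    have h2 := j.isLt
    have h : ((i:ℕ) + (j:ℕ) + 1 = n) ↔ (i = j.rev) := by
      rw [Fin.ext_iff, Fin.val_rev]; omega
    simp [Tmat, h]
  have hTmul : ∀ M : Matrix (Fin n) (Fin n) ℝ, ∀ i j, (Tmat n * M) i j = M i.rev j := by
    intro M i j
    rw [Matrix.mul_apply]
    simp only [hTapp, ite_mul, one_mul, zero_mul, Finset.sum_ite_eq', Finset.mem_univ, if_true]
  have hmulT : ∀ M : Matrix (Fin n) (Fin n) ℝ, ∀ i j, (M * Tmat n) i j = M i j.rev := by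
    intro M i j
    rw [Matrix.mul_apply]
    simp only [hTapp', mul_ite, mul_one, mul_zero, Finset.sum_ite_eq', Finset.mem_univ, if_true]
  have hTT : Tmat n * Tmat n = 1 := by
    ext i j
    rw [hTmul, hTapp, Matrix.one_apply, Fin.rev_rev]
    simp [eq_comm]
  have hTMT : ∀ M : Matrix (Fin n) (Fin n) ℝ, ∀ i j,
      (Tmat n * M * Tmat n) i j = M i.rev j.rev := by
    intro M i j
    rw [hmulT, hTmul]
  -- trace against P
  have hP : ∀ i j : Fin n, Pmat n i j = if j = last then 1 else 0 := by
    intro i j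
    have h1 := j.isLt
    have h : ((j:ℕ) + 1 = n) ↔ (j = last) := by
      rw [Fin.ext_iff, hlastval]; omega
    simp [Pmat, h]
  have htraceP : ∀ X : Matrix (Fin n) (Fin n) ℝ,
      Matrix.trace (Pmat n * X) = ∑ i, X last i := by
    intro X
    simp only [Matrix.trace, Matrix.diag, Matrix.mul_apply, hP, ite_mul, one_mul, zero_mul,
      Finset.sum_ite_eq', Finset.mem_univ, if_true]
  -- conjugation by T and powers
  have hconj : ∀ (M : Matrix (Fin n) (Fin n) ℝ) (m : ℕ),
      (Tmat n * M * Tmat n) ^ m = Tmat n * M ^ m * Tmat n := by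
    intro M m
    induction m with
    | zero => rw [pow_zero, pow_zero, Matrix.mul_one, hTT]
    | succ m ih =>
      rw [pow_succ, pow_succ, ih]
      have h : Tmat n * (Tmat n * (M * Tmat n)) = M * Tmat n := by
        rw [← Matrix.mul_assoc, hTT, Matrix.one_mul]
      simp only [Matrix.mul_assoc]
      rw [h]
  have hBpow : ∀ m : ℕ, (Dmat n d * A * Gmat n d) ^ m = Dmat n d * A ^ m * Gmat n d := by
    intro m
    induction m with
    | zero => rw [pow_zero, pow_zero, Matrix.mul_one, hDG]
    | succ m ih =>
      rw [pow_succ, pow_succ, ih]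
      have h : Gmat n d * (Dmat n d * (A * Gmat n d)) = A * Gmat n d := by
        rw [← Matrix.mul_assoc, hGD, Matrix.one_mul]
      simp only [Matrix.mul_assoc]
      rw [h]
  have hAt : Atil ^ k = Tmat n * (Dmat n d * A ^ k * Gmat n d)ᵀ * Tmat n := by
    rw [hAtil, hconj, ← Matrix.transpose_pow, hBpow]
  -- the key product form
  have key : ∀ N : Matrix (Fin n) (Fin n) ℝ,
      Tmat n * N * Tmat n * (Tmat n * C * Tmat n) = Tmat n * (N * C) * Tmat n := by
    intro N
    have h : Tmat n * (Tmat n * (C * Tmat n)) = C * Tmat n := by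
      rw [← Matrix.mul_assoc, hTT, Matrix.one_mul]
    simp only [Matrix.mul_assoc, h]
  have hX : Atil ^ k * Ctil
      = Tmat n * ((Dmat n d * A ^ k * Gmat n d)ᵀ * (1 - C)) * Tmat n := by
    rw [hAt, hCtil]
    simp only [Matrix.mul_sub, Matrix.sub_mul, Matrix.mul_one]
    rw [key]
  have hrevlast : last.rev = z := by
    apply Fin.ext
    rw [Fin.val_rev, hzval, hlastval]
    omega
  have hdiag : (1 : Matrix (Fin n) (Fin n) ℝ) - Matrix.diagonal c
      = Matrix.diagonal (fun i => 1 - c i) := by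
    ext i j
    rcases eq_or_ne i j with h | h <;>
      simp [h, Matrix.one_apply, Matrix.diagonal_apply, Matrix.sub_apply]
  -- the row-sum form of the RHS
  have hR : ∑ j, (A ^ (k+1)) last j = ∑ i, (A ^ k) last i * c i := by
    simp only [pow_succ, Matrix.mul_apply]
    rw [Finset.sum_comm]
    simp only [← Finset.mul_sum, hArow]
  -- main computation
  rw [Matrix.mul_assoc, Matrix.mul_assoc, htraceP, htraceP]
  calc ∑ i, (Atil ^ k * Ctil) last i
      = ∑ i : Fin n, (Dmat n d * A ^ k * Gmat n d) i.rev z * (1 - c i.rev) := by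
        refine Finset.sum_congr rfl fun i _ => ?_
        rw [hX, hTMT, hrevlast, hC, hdiag, Matrix.mul_diagonal, Matrix.transpose_apply]
    _ = ∑ j, (Dmat n d * A ^ k * Gmat n d) j z * (1 - c j) := by
        exact Fintype.sum_bijective Fin.rev Fin.rev_bijective
          (fun i => (Dmat n d * A ^ k * Gmat n d) i.rev z * (1 - c i.rev))
          (fun j => (Dmat n d * A ^ k * Gmat n d) j z * (1 - c j))
          (fun i => rfl)
    _ = (A ^ (k+1) * Gmat n d) last z := by
        have hFX : Fmat n c * (Dmat n d * A ^ k * Gmat n d) = A ^ (k+1) * Gmat n d := by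
          rw [pow_succ']
          simp only [← Matrix.mul_assoc]
          rw [← hA]
        rw [← hFX, Matrix.mul_apply]
        exact Finset.sum_congr rfl fun j _ => by rw [hFlast]; ring
    _ = ∑ i, (A ^ (k+1)) last i := by
        rw [Matrix.mul_apply]
        exact Finset.sum_congr rfl fun i _ => by rw [hGcol, mul_one]
    _ = ∑ i, (A ^ k * C) last i := by
        rw [hC]
        simp only [Matrix.mul_diagonal]
        exact hR
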